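/- Let M = (S, A, AP, L, I) be an interval Markov decision process and let s, t ∈ S with s ∼∀ t. Then for every PCTL state formula φ, s ⊨∃ φ if and only if t ⊨∃ φ. -/

import Mathlib

open scoped Classical
open MeasureTheory

structure IMDP (S A AP : Type) [Fintype S] [Fintype A] : Type where
  L : S → Set AP
  Il : S → A → S → ℝ
  Iu : S → A → S → ℝ
  Il_nonneg : ∀ s a s', 0 ≤ Il s a s'
  Il_le_Iu : ∀ s a s', Il s a s' ≤ Iu s a s'
  Iu_le_one : ∀ s a s', Iu s a s' ≤ 1
  feasible_nonempty : ∀ s a, ∃ μ : S → ℝ,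
    (∀ s', 0 ≤ μ s') ∧ (∑ s', μ s') = 1 ∧
      ∀ s', μ s' ∈ Set.Icc (Il s a s') (Iu s a s')

def IsDist {X : Type} [Fintype X] (μ : X → ℝ) : Prop :=
  (∀ x, 0 ≤ μ x) ∧ (∑ x, μ x) = 1

def Feasible {S A AP : Type} [Fintype S] [Fintype A] (M : IMDP S A AP)
    (s : S) (a : A) (μ : S → ℝ) : Prop :=
  IsDist μ ∧ ∀ s', μ s' ∈ Set.Icc (M.Il s a s') (M.Iu s a s')

noncomputable def classMass {S : Type} [Fintype S] (R : S → S → Prop)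
    (μ : S → ℝ) (c : S) : ℝ :=
  ∑ s', if R c s' then μ s' else 0

def StepTo {S A AP : Type} [Fintype S] [Fintype A] (M : IMDP S A AP)
    (s : S) (μ : S → ℝ) : Prop :=
  μ ∈ convexHull ℝ (⋃ a : A, {ν : S → ℝ | Feasible M s a ν})

def IsForallBisim {S A AP : Type} [Fintype S] [Fintype A] (M : IMDP S A AP)
    (R : S → S → Prop) : Prop :=
  Equivalence R ∧ ∀ s t : S, R s t → M.L s = M.L t ∧
    ∀ μ : S → ℝ, StepTo M s μ →
      ∃ ν : S → ℝ, StepTo M t ν ∧ ∀ c : S, classMass R μ c = classMass R ν c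

def SimForall {S A AP : Type} [Fintype S] [Fintype A] (M : IMDP S A AP)
    (s t : S) : Prop :=
  ∃ R : S → S → Prop, IsForallBisim M R ∧ R s t

inductive Cmp : Type where
  | le : Cmp
  | lt : Cmp
  | ge : Cmp
  | gt : Cmp

def Cmp.eval : Cmp → ℝ → ℝ → Prop
  | Cmp.le, x, y => x ≤ y
  | Cmp.lt, x, y => x < y
  | Cmp.ge, x, y => y ≤ x
  | Cmp.gt, x, y => y < x

mutual
  inductive StateFormula (AP : Type) : Type where
    | tt : StateFormula AP
    | atom : AP → StateFormula AP
    | neg : StateFormula AP → StateFormula AP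
    | conj : StateFormula AP → StateFormula AP → StateFormula AP
    | prob : Cmp → (p : ℚ) → 0 ≤ p → p ≤ 1 → PathFormula AP → StateFormula AP
  inductive PathFormula (AP : Type) : Type where
    | next : StateFormula AP → PathFormula AP
    | untl : StateFormula AP → StateFormula AP → PathFormula AP
    | buntl : ℕ → StateFormula AP → StateFormula AP → PathFormula AP
end

abbrev FinPath (S : Type) : Type := {l : List S // l ≠ []}

structure Scheduler (S A : Type) [Fintype A] : Type where
  f : FinPath S → A → ℝ
  dist : ∀ ω : FinPath S, IsDist (f ω)

structure Nature {S A AP : Type} [Fintype S] [Fintype A] (M : IMDP S A AP) : Type where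
  f : FinPath S → A → S → ℝ
  feasible : ∀ (ω : FinPath S) (a : A), Feasible M (ω.1.getLast ω.2) a (f ω a)

def Cyl {S : Type} (l : List S) : Set (ℕ → S) :=
  {ρ | ∀ i : Fin l.length, ρ (i : ℕ) = l.get i}

def pathSigma (S : Type) : MeasurableSpace (ℕ → S) :=
  MeasurableSpace.generateFrom {C : Set (ℕ → S) | ∃ l : List S, l ≠ [] ∧ C = Cyl l}

def IsPathMeasure {S A AP : Type} [Fintype S] [Fintype A] (M : IMDP S A AP)
    (s : S) (σ : Scheduler S A) (π : Nature M)
    (Pr : @Measure (ℕ → S) (pathSigma S)) : Prop :=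
  IsProbabilityMeasure Pr ∧
  (∀ s' : S, Pr (Cyl [s']) = if s' = s then 1 else 0) ∧
  ∀ (l : List S) (h : l ≠ []) (s' : S),
    Pr (Cyl (l ++ [s'])) = Pr (Cyl l) *
      ENNReal.ofReal (∑ a, σ.f ⟨l, h⟩ a * π.f ⟨l, h⟩ a s')

mutual
  def SatE {S A AP : Type} [Fintype S] [Fintype A] (M : IMDP S A AP)
      (Pr : S → Scheduler S A → Nature M → @Measure (ℕ → S) (pathSigma S)) :
      StateFormula AP → S → Prop
    | StateFormula.tt, _ => True
    | StateFormula.atom x, s => x ∈ M.L s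
    | StateFormula.neg φ, s => ¬ SatE M Pr φ s
    | StateFormula.conj φ₁ φ₂, s => SatE M Pr φ₁ s ∧ SatE M Pr φ₂ s
    | StateFormula.prob c p _ _ ψ, s =>
        ∃ (σ : Scheduler S A) (π : Nature M),
          Cmp.eval c ((Pr s σ π {ρ : ℕ → S | PSatE M Pr ψ ρ}).toReal) (p : ℝ)
  def PSatE {S A AP : Type} [Fintype S] [Fintype A] (M : IMDP S A AP)
      (Pr : S → Scheduler S A → Nature M → @Measure (ℕ → S) (pathSigma S)) :
      PathFormula AP → (ℕ → S) → Prop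
    | PathFormula.next φ, ρ => SatE M Pr φ (ρ 1)
    | PathFormula.untl φ₁ φ₂, ρ => ∃ k : ℕ, ∃ i : ℕ, i < k ∧ SatE M Pr φ₂ (ρ i) ∧
        ∀ j : ℕ, j < i → SatE M Pr φ₁ (ρ j)
    | PathFormula.buntl k φ₁ φ₂, ρ => ∃ i : ℕ, i < k ∧ SatE M Pr φ₂ (ρ i) ∧
        ∀ j : ℕ, j < i → SatE M Pr φ₁ (ρ j)
end

section PartA
variable {S A AP : Type} [Fintype S] [Fintype A]

lemma isDist_convex : Convex ℝ {μ : S → ℝ | IsDist μ} := by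
  intro μ hμ ν hν a b ha hb hab
  constructor
  · intro x
    have := hμ.1 x; have := hν.1 x
    have : (a • μ + b • ν) x = a * μ x + b * ν x := rfl
    rw [this]; positivity
  · have : ∀ x, (a • μ + b • ν) x = a * μ x + b * ν x := fun _ => rfl
    simp only [this, Finset.sum_add_distrib, ← Finset.mul_sum, hμ.2, hν.2]
    linarith

lemma stepTo_isDist (M : IMDP S A AP) {s : S} {μ : S → ℝ} (h : StepTo M s μ) :
    IsDist μ := by
  have hsub : (⋃ a : A, {ν : S → ℝ | Feasible M s a ν}) ⊆ {μ : S → ℝ | IsDist μ} := by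
    intro ν hν
    rcases Set.mem_iUnion.1 hν with ⟨a, ha⟩
    exact ha.1
  exact convexHull_min hsub isDist_convex h

/-- combined one-step distribution of a scheduler and a nature -/
noncomputable def comb (M : IMDP S A AP) (σ : Scheduler S A) (π : Nature M)
    (ω : FinPath S) : S → ℝ :=
  fun x => ∑ a, σ.f ω a * π.f ω a x

lemma comb_eq_sum_smul (M : IMDP S A AP) (σ : Scheduler S A) (π : Nature M)
    (ω : FinPath S) : comb M σ π ω = ∑ a, σ.f ω a • π.f ω a := by
  funext x
  simp [comb, Finset.sum_apply]

lemma comb_step (M : IMDP S A AP) (σ : Scheduler S A) (π : Nature M)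
    (ω : FinPath S) : StepTo M (ω.1.getLast ω.2) (comb M σ π ω) := by
  rw [comb_eq_sum_smul]
  refine Convex.sum_mem (convex_convexHull ℝ _) (fun a _ => (σ.dist ω).1 a)
    ((σ.dist ω).2) (fun a _ => ?_)
  exact subset_convexHull ℝ _ (Set.mem_iUnion.2 ⟨a, π.feasible ω a⟩)

lemma comb_nonneg (M : IMDP S A AP) (σ : Scheduler S A) (π : Nature M)
    (ω : FinPath S) (x : S) : 0 ≤ comb M σ π ω x :=
  Finset.sum_nonneg fun a _ => mul_nonneg ((σ.dist ω).1 a) ((π.feasible ω a).1.1 x)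

section ClassMass
variable {R : S → S → Prop}

lemma classMass_nonneg {μ : S → ℝ} (hμ : ∀ x, 0 ≤ μ x) (c : S) :
    0 ≤ classMass R μ c :=
  Finset.sum_nonneg fun x _ => by by_cases h : R c x <;> simp [h, hμ x]

lemma le_classMass (hR : Equivalence R) {μ : S → ℝ} (hμ : ∀ x, 0 ≤ μ x) (c : S) :
    μ c ≤ classMass R μ c := by
  have : μ c = if R c c then μ c else 0 := by simp [hR.refl c]
  rw [this]
  exact Finset.single_le_sum (f := fun x => if R c x then μ x else 0)
    (fun x _ => by by_cases h : R c x <;> simp [h, hμ x]) (Finset.mem_univ c)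

lemma classMass_congr (hR : Equivalence R) {μ : S → ℝ} {c c' : S} (h : R c c') :
    classMass R μ c = classMass R μ c' := by
  refine Finset.sum_congr rfl fun x _ => ?_
  by_cases hx : R c x
  · rw [if_pos hx, if_pos (hR.trans (hR.symm h) hx)]
  · rw [if_neg hx, if_neg (fun hx' => hx (hR.trans h hx'))]

/-- coupling of two distributions with equal class masses -/
noncomputable def gam (R : S → S → Prop) (μ ν : S → ℝ) (x y : S) : ℝ :=
  if R x y then μ x * ν y / classMass R μ x else 0

lemma gam_nonneg {μ ν : S → ℝ} (hμ : ∀ x, 0 ≤ μ x) (hν : ∀ x, 0 ≤ ν x)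
    (x y : S) : 0 ≤ gam R μ ν x y := by
  unfold gam
  by_cases h : R x y
  · rw [if_pos h]
    exact div_nonneg (mul_nonneg (hμ x) (hν y)) (classMass_nonneg hμ x)
  · rw [if_neg h]

lemma gam_supp {μ ν : S → ℝ} {x y : S} (h : gam R μ ν x y ≠ 0) : R x y := by
  by_contra hc
  exact h (by simp [gam, hc])

lemma gam_fst (hR : Equivalence R) {μ ν : S → ℝ} (hμ : ∀ x, 0 ≤ μ x)
    (hν : ∀ x, 0 ≤ ν x) (hcm : ∀ c, classMass R μ c = classMass R ν c) (x : S) :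
    ∑ y, gam R μ ν x y = μ x := by
  have step : ∀ y, gam R μ ν x y = μ x / classMass R μ x * (if R x y then ν y else 0) := by
    intro y
    by_cases h : R x y <;> simp [gam, h] <;> ring
  rw [Finset.sum_congr rfl (fun y _ => step y), ← Finset.mul_sum]
  have : ∑ y, (if R x y then ν y else 0) = classMass R ν x := rfl
  rw [this, ← hcm x]
  by_cases hm : classMass R μ x = 0
  · have h1 : μ x ≤ 0 := hm ▸ le_classMass hR hμ x
    have : μ x = 0 := le_antisymm h1 (hμ x)
    simp [this, hm]
  · field_simp

lemma gam_snd (hR : Equivalence R) {μ ν : S → ℝ} (hμ : ∀ x, 0 ≤ μ x)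
    (hν : ∀ x, 0 ≤ ν x) (hcm : ∀ c, classMass R μ c = classMass R ν c) (y : S) :
    ∑ x, gam R μ ν x y = ν y := by
  have step : ∀ x, gam R μ ν x y
      = ν y / classMass R μ y * (if R y x then μ x else 0) := by
    intro x
    by_cases h : R x y
    · rw [gam, if_pos h, if_pos (hR.symm h), classMass_congr hR h]
      ring
    · rw [gam, if_neg h, if_neg (fun h' => h (hR.symm h'))]
      ring
  rw [Finset.sum_congr rfl (fun x _ => step x), ← Finset.mul_sum]
  have : ∑ x, (if R y x then μ x else 0) = classMass R μ y := rfl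
  rw [this]
  by_cases hm : classMass R μ y = 0
  · have h1 : ν y ≤ 0 := by
      have := le_classMass hR hν y
      rw [← hcm y, hm] at this
      exact this
    have : ν y = 0 := le_antisymm h1 (hν y)
    simp [this, hm]
  · field_simp

end ClassMass

lemma stepTo_decomp (M : IMDP S A AP) (st : S) (ν : S → ℝ) (h : StepTo M st ν) :
    ∃ p : (A → ℝ) × (A → S → ℝ), IsDist p.1 ∧ (∀ a, Feasible M st a (p.2 a)) ∧
      ∀ x, ∑ a, p.1 a * p.2 a x = ν x := by
  rw [StepTo, convexHull_eq] at h
  obtain ⟨ι, tset, w, z, hw0, hw1, hz, hcm⟩ := h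
  rw [Finset.centerMass_eq_of_sum_1 _ _ hw1] at hcm
  -- A is nonempty
  have htne : tset.Nonempty := by
    by_contra hne
    rw [Finset.not_nonempty_iff_eq_empty] at hne
    simp [hne] at hw1
  obtain ⟨i0, hi0⟩ := htne
  obtain ⟨a0, _⟩ := Set.mem_iUnion.1 (hz i0 hi0)
  haveI : Nonempty A := ⟨a0⟩
  classical
  -- choose an action for each index
  have hact : ∀ i ∈ tset, ∃ a, Feasible M st a (z i) := fun i hi => Set.mem_iUnion.1 (hz i hi)
  set act : ι → A := fun i => if h : ∃ a, Feasible M st a (z i) then h.choose else Classical.arbitrary A with hactdef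
  have hactspec : ∀ i ∈ tset, Feasible M st (act i) (z i) := by
    intro i hi
    have h := hact i hi
    simp only [hactdef, dif_pos h]
    exact h.choose_spec
  set σd : A → ℝ := fun a => ∑ i ∈ tset.filter (fun i => act i = a), w i with hσd
  set πd : A → S → ℝ := fun a =>
    if hs : σd a ≠ 0 then (σd a)⁻¹ • ∑ i ∈ tset.filter (fun i => act i = a), w i • z i
    else (M.feasible_nonempty st a).choose with hπd
  have hσd0 : ∀ a, 0 ≤ σd a := fun a =>
    Finset.sum_nonneg fun i hi => hw0 i (Finset.mem_of_mem_filter i hi)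
  have hσsum : ∑ a, σd a = 1 := by
    rw [hσd, ← hw1]
    exact Finset.sum_fiberwise _ _ _
  have hwzero : ∀ a, σd a = 0 → ∀ i ∈ tset.filter (fun i => act i = a), w i = 0 := by
    intro a ha i hi
    have := (Finset.sum_eq_zero_iff_of_nonneg
      (fun j hj => hw0 j (Finset.mem_of_mem_filter j hj))).1 ha
    exact this i hi
  refine ⟨⟨σd, πd⟩, ⟨hσd0, hσsum⟩, ?_, ?_⟩
  · intro a
    show Feasible M st a (πd a)
    by_cases hs : σd a = 0
    · have hspec := (M.feasible_nonempty st a).choose_spec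
      rw [hπd]
      simp only [hs, ne_eq, not_true_eq_false, dif_neg, not_not]
      exact ⟨⟨hspec.1, hspec.2.1⟩, hspec.2.2⟩
    · have hpos : 0 < σd a := lt_of_le_of_ne (hσd0 a) (Ne.symm hs)
      have hval : ∀ x, πd a x = (σd a)⁻¹ * ∑ i ∈ tset.filter (fun i => act i = a), w i * z i x := by
        intro x
        rw [hπd]
        simp only [ne_eq, hs, not_false_iff, dif_pos]
        simp [Finset.sum_apply]
      constructor
      · constructor
        · intro x
          rw [hval x]
          refine mul_nonneg (inv_nonneg.2 (hσd0 a)) (Finset.sum_nonneg fun i hi => ?_)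
          exact mul_nonneg (hw0 i (Finset.mem_of_mem_filter i hi))
            ((hactspec i (Finset.mem_of_mem_filter i hi)).1.1 x)
        · simp only [hval, ← Finset.mul_sum]
          rw [Finset.sum_comm]
          have : ∀ i ∈ tset.filter (fun i => act i = a), ∑ x, w i * z i x = w i := by
            intro i hi
            rw [← Finset.mul_sum, (hactspec i (Finset.mem_of_mem_filter i hi)).1.2, mul_one]
          rw [Finset.sum_congr rfl this]
          exact inv_mul_cancel₀ hs
      · intro x
        rw [hval x]
        have hfi : ∀ i ∈ tset.filter (fun i => act i = a),
            w i * M.Il st a x ≤ w i * z i x ∧ w i * z i x ≤ w i * M.Iu st a x := by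
          intro i hi
          have hf := hactspec i (Finset.mem_of_mem_filter i hi)
          have hia : act i = a := (Finset.mem_filter.1 hi).2
          have hwi := hw0 i (Finset.mem_of_mem_filter i hi)
          rw [← hia]
          exact ⟨mul_le_mul_of_nonneg_left (hf.2 x).1 hwi,
            mul_le_mul_of_nonneg_left (hf.2 x).2 hwi⟩
        have hlow : σd a * M.Il st a x ≤ ∑ i ∈ tset.filter (fun i => act i = a), w i * z i x := by
          rw [hσd, Finset.sum_mul]
          exact Finset.sum_le_sum fun i hi => (hfi i hi).1
        have hhigh : ∑ i ∈ tset.filter (fun i => act i = a), w i * z i x ≤ σd a * M.Iu st a x := by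
          rw [hσd, Finset.sum_mul]
          exact Finset.sum_le_sum fun i hi => (hfi i hi).2
        constructor
        · rw [le_inv_mul_iff₀ hpos]
          exact hlow
        · calc (σd a)⁻¹ * ∑ i ∈ tset.filter (fun i => act i = a), w i * z i x
              ≤ (σd a)⁻¹ * (σd a * M.Iu st a x) :=
              mul_le_mul_of_nonneg_left hhigh (inv_nonneg.2 (hσd0 a))
          _ = M.Iu st a x := by field_simp
  · intro x
    show ∑ a, σd a * πd a x = ν x
    have key : ∀ a, σd a * πd a x = ∑ i ∈ tset.filter (fun i => act i = a), w i * z i x := by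
      intro a
      by_cases hs : σd a = 0
      · rw [hs, zero_mul]
        symm
        exact Finset.sum_eq_zero fun i hi => by rw [hwzero a hs i hi, zero_mul]
      · rw [hπd]
        simp only [ne_eq, hs, not_false_iff, dif_pos]
        simp only [Pi.smul_apply, Finset.sum_apply, smul_eq_mul, Pi.smul_apply]
        rw [← mul_assoc, mul_inv_cancel₀ hs, one_mul]
    rw [Finset.sum_congr rfl fun a _ => key a,
        Finset.sum_fiberwise tset act (fun i => w i * z i x)]
    have := congrFun hcm x
    simpa [Finset.sum_apply] using this

end PartA

section PartB
variable {S A AP : Type} [Fintype S] [Fintype A]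

def snocEquiv (S : Type) (n : ℕ) : ((Fin n → S) × S) ≃ (Fin (n+1) → S) where
  toFun p := Fin.snoc p.1 p.2
  invFun g := (fun i => g i.castSucc, g (Fin.last n))
  left_inv p := by
    ext i
    · simp
    · simp
  right_inv g := by
    funext i
    cases i using Fin.lastCases
    · simp
    · simp

lemma sum_snoc {n : ℕ} (F : (Fin (n+1) → S) → ℝ) :
    ∑ g : Fin (n+1) → S, F g = ∑ g0 : Fin n → S, ∑ y : S, F (Fin.snoc g0 y) := by
  rw [← Equiv.sum_comp (snocEquiv S n) F, Fintype.sum_prod_type]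
  rfl

lemma ofFn_snoc {n : ℕ} (g0 : Fin n → S) (y : S) :
    List.ofFn (Fin.snoc g0 y : Fin (n+1) → S) = List.ofFn g0 ++ [y] := by
  rw [List.ofFn_succ' (Fin.snoc g0 y), List.concat_eq_append]
  congr 1
  · congr 1
    funext i
    simp
  · simp

lemma sum_ofFn_reindex {m m' : ℕ} (h : m = m') (F : List S → ℝ) :
    ∑ f : Fin m → S, F (List.ofFn f) = ∑ f : Fin m' → S, F (List.ofFn f) := by
  subst h; rfl

lemma ofFn_ne_nil {n : ℕ} (f : Fin (n+1) → S) : List.ofFn f ≠ [] := by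
  intro h
  have := List.length_ofFn (f := f)
  rw [h] at this
  simp at this

variable (M : IMDP S A AP) (R : S → S → Prop) (σ : Scheduler S A) (π : Nature M)
    (s t : S)

/-- combined step on raw lists -/
noncomputable def muc : List S → S → ℝ :=
  fun l => if h : l = [] then (fun _ => 0) else comb M σ π ⟨l, h⟩

lemma muc_nonneg (l : List S) (x : S) : 0 ≤ muc M σ π l x := by
  unfold muc
  by_cases h : l = []
  · simp [h]
  · simp only [h, dif_neg]
    exact comb_nonneg M σ π _ x

lemma muc_eq (l : List S) (h : l ≠ []) : muc M σ π l = comb M σ π ⟨l, h⟩ := by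
  simp [muc, h]

/-- matched step distribution from the bisimulation -/
lemma muc_step (l : List S) (h : l ≠ []) : StepTo M (l.getLast h) (muc M σ π l) := by
  rw [muc_eq M σ π l h]
  exact comb_step M σ π ⟨l, h⟩

noncomputable def nm (hR : IsForallBisim M R) (l l' : List S) : S → ℝ :=
  if h : ∃ (h1 : l ≠ []) (h2 : l' ≠ []), R (l.getLast h1) (l'.getLast h2) then
    ((hR.2 _ _ h.choose_spec.choose_spec).2 (muc M σ π l)
      (muc_step M σ π l h.choose)).choose
  else fun _ => 0

lemma nm_spec (hR : IsForallBisim M R) {l l' : List S} (h1 : l ≠ []) (h2 : l' ≠ [])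
    (hr : R (l.getLast h1) (l'.getLast h2)) :
    StepTo M (l'.getLast h2) (nm M R σ π hR l l') ∧
      ∀ c, classMass R (muc M σ π l) c = classMass R (nm M R σ π hR l l') c := by
  have hex : ∃ (h1 : l ≠ []) (h2 : l' ≠ []), R (l.getLast h1) (l'.getLast h2) := ⟨h1, h2, hr⟩
  unfold nm
  rw [dif_pos hex]
  exact ((hR.2 _ _ hex.choose_spec.choose_spec).2 (muc M σ π l)
    (muc_step M σ π l hex.choose)).choose_spec

lemma nm_nonneg (hR : IsForallBisim M R) (l l' : List S) (x : S) :
    0 ≤ nm M R σ π hR l l' x := by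
  by_cases h : ∃ (h1 : l ≠ []) (h2 : l' ≠ []), R (l.getLast h1) (l'.getLast h2)
  · obtain ⟨h1, h2, hr⟩ := h
    exact (stepTo_isDist M (nm_spec M R σ π hR h1 h2 hr).1).1 x
  · rw [nm, dif_neg h]

/-- the coupling weights, on reversed paths (for structural recursion) -/
noncomputable def V (hR : IsForallBisim M R) : List S → List S → ℝ
  | [x], [y] => if x = s ∧ y = t then 1 else 0
  | x :: a :: l, y :: b :: l' =>
      V hR (a :: l) (b :: l') *
        gam R (muc M σ π (a :: l).reverse)
          (nm M R σ π hR (a :: l).reverse (b :: l').reverse) x y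
  | _, _ => 0

/-- the coupling weights on paths -/
noncomputable def W (hR : IsForallBisim M R) (l l' : List S) : ℝ :=
  V M R σ π s t hR l.reverse l'.reverse

lemma W_single (hR : IsForallBisim M R) (x y : S) :
    W M R σ π s t hR [x] [y] = if x = s ∧ y = t then 1 else 0 := rfl

lemma W_append (hR : IsForallBisim M R) (l l' : List S) (h : l ≠ []) (h' : l' ≠ [])
    (x y : S) :
    W M R σ π s t hR (l ++ [x]) (l' ++ [y]) =
      W M R σ π s t hR l l' * gam R (muc M σ π l) (nm M R σ π hR l l') x y := by
  unfold W
  rw [List.reverse_append, List.reverse_append]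
  obtain ⟨a, rl, ha⟩ : ∃ a rl, l.reverse = a :: rl := by
    cases hrl : l.reverse with
    | nil => exact absurd (by simpa using congrArg List.reverse hrl) h
    | cons a rl => exact ⟨a, rl, rfl⟩
  obtain ⟨b, rl', hb⟩ : ∃ b rl', l'.reverse = b :: rl' := by
    cases hrl : l'.reverse with
    | nil => exact absurd (by simpa using congrArg List.reverse hrl) h'
    | cons b rl' => exact ⟨b, rl', rfl⟩
  rw [ha, hb]
  show V M R σ π s t hR (x :: a :: rl) (y :: b :: rl') = _
  rw [V]
  have h1 : (a :: rl).reverse = l := by rw [← ha, List.reverse_reverse]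
  have h2 : (b :: rl').reverse = l' := by rw [← hb, List.reverse_reverse]
  rw [h1, h2]

lemma V_zero (hR : IsForallBisim M R) (l l' : List S)
    (h1 : ∀ (x y : S), l = [x] → l' = [y] → False)
    (h2 : ∀ (x a : S) (l0 : List S) (y b : S) (l0' : List S),
        l = x :: a :: l0 → l' = y :: b :: l0' → False) :
    V M R σ π s t hR l l' = 0 := by
  rw [V.eq_def]
  split
  · exact ((h1 _ _ rfl rfl)).elim
  · exact ((h2 _ _ _ _ _ _ rfl rfl)).elim
  · rfl

lemma V_nonneg (hR : IsForallBisim M R) :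
    ∀ rl rl', 0 ≤ V M R σ π s t hR rl rl' := by
  intro rl rl'
  induction rl, rl' using V.induct s t with
  | case1 x y h => show (0:ℝ) ≤ if x = s ∧ y = t then 1 else 0; split <;> norm_num
  | case2 x y h => show (0:ℝ) ≤ if x = s ∧ y = t then 1 else 0; split <;> norm_num
  | case3 x a l y b l' ih =>
      rw [V]
      exact mul_nonneg ih (gam_nonneg (muc_nonneg M σ π _) (nm_nonneg M R σ π hR _ _) x y)
  | case4 l l' h1 h2 => rw [V_zero M R σ π s t hR l l' h1 h2]

lemma W_nonneg (hR : IsForallBisim M R) (l l' : List S) :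
    0 ≤ W M R σ π s t hR l l' := V_nonneg M R σ π s t hR _ _

lemma V_supp (hR : IsForallBisim M R) (hRst : R s t) :
    ∀ rl rl', V M R σ π s t hR rl rl' ≠ 0 → List.Forall₂ R rl rl' := by
  intro rl rl'
  induction rl, rl' using V.induct s t with
  | case1 x y h =>
      intro _
      exact List.Forall₂.cons (by rw [h.1, h.2]; exact hRst) List.Forall₂.nil
  | case2 x y h =>
      intro hne
      exact absurd (show V M R σ π s t hR [x] [y] = 0 from if_neg h) hne
  | case3 x a l y b l' ih =>
      intro hne
      rw [V] at hne
      have hV : V M R σ π s t hR (a :: l) (b :: l') ≠ 0 := fun hc => hne (by rw [hc, zero_mul])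
      have hg : gam R (muc M σ π (a :: l).reverse)
          (nm M R σ π hR (a :: l).reverse (b :: l').reverse) x y ≠ 0 :=
        fun hc => hne (by rw [hc, mul_zero])
      exact List.Forall₂.cons (gam_supp hg) (ih hV)
  | case4 l l' h1 h2 =>
      intro hne
      exact absurd (V_zero M R σ π s t hR l l' h1 h2) hne

lemma W_supp (hR : IsForallBisim M R) (hRst : R s t) {l l' : List S}
    (hne : W M R σ π s t hR l l' ≠ 0) : List.Forall₂ R l l' :=
  List.forall₂_reverse_iff.1 (V_supp M R σ π s t hR hRst _ _ hne)

lemma W_last (hR : IsForallBisim M R) (hRst : R s t) {l l' : List S}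
    (hne : W M R σ π s t hR l l' ≠ 0) (h1 : l ≠ []) (h2 : l' ≠ []) :
    R (l.getLast h1) (l'.getLast h2) := by
  obtain ⟨hlen, hpt⟩ := List.forall₂_iff_get.1 (W_supp M R σ π s t hR hRst hne)
  have hl : 0 < l.length := List.length_pos_iff.2 h1
  rw [List.getLast_eq_getElem, List.getLast_eq_getElem]
  have := hpt (l.length - 1) (by omega) (by omega)
  simp only [List.get_eq_getElem] at this
  convert this using 3
  omega

end PartB

section PartB2
variable {S A AP : Type} [Fintype S] [Fintype A]
variable (M : IMDP S A AP) (R : S → S → Prop) (σ : Scheduler S A) (π : Nature M)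
    (s t : S)

/-- total mass reaching a given target path -/
noncomputable def T (hR : IsForallBisim M R) (l' : List S) : ℝ :=
  ∑ f : Fin l'.length → S, W M R σ π s t hR (List.ofFn f) l'

noncomputable def nbar [Nonempty A] (hR : IsForallBisim M R) (l' : List S) : S → ℝ :=
  if h : l' ≠ [] then
    (if hT : T M R σ π s t hR l' ≠ 0 then
      (T M R σ π s t hR l')⁻¹ •
        ∑ f : Fin l'.length → S, W M R σ π s t hR (List.ofFn f) l' • nm M R σ π hR (List.ofFn f) l'
     else (M.feasible_nonempty (l'.getLast h) (Classical.arbitrary A)).choose)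
  else fun _ => 0

lemma T_nonneg (hR : IsForallBisim M R) (l' : List S) : 0 ≤ T M R σ π s t hR l' :=
  Finset.sum_nonneg fun f _ => W_nonneg M R σ π s t hR _ _

lemma nbar_step [Nonempty A] (hR : IsForallBisim M R) (hRst : R s t) (l' : List S)
    (h : l' ≠ []) : StepTo M (l'.getLast h) (nbar M R σ π s t hR l') := by
  rw [nbar, dif_pos h]
  by_cases hT : T M R σ π s t hR l' ≠ 0
  · rw [dif_pos hT]
    rw [Finset.smul_sum]
    simp only [smul_smul]
    set c := fun f : Fin l'.length → S => (T M R σ π s t hR l')⁻¹ * W M R σ π s t hR (List.ofFn f) l' with hc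
    have hsupp : ∀ f ∈ Finset.univ \ Finset.univ.filter
        (fun f : Fin l'.length → S => W M R σ π s t hR (List.ofFn f) l' ≠ 0),
        c f • nm M R σ π hR (List.ofFn f) l' = 0 := by
      intro f hf
      simp only [Finset.mem_sdiff, Finset.mem_filter, Finset.mem_univ, true_and, not_not] at hf
      rw [hc]
      simp [hf]
    rw [← Finset.sum_subset (Finset.filter_subset _ _) (fun f _ hf => hsupp f (by simp only [Finset.mem_sdiff]; exact ⟨Finset.mem_univ f, hf⟩))]
    refine Convex.sum_mem (convex_convexHull ℝ _) ?_ ?_ ?_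
    · intro f _
      exact mul_nonneg (inv_nonneg.2 (T_nonneg M R σ π s t hR l')) (W_nonneg M R σ π s t hR _ _)
    · rw [hc]
      simp only
      rw [← Finset.mul_sum]
      rw [Finset.sum_filter_ne_zero]
      exact inv_mul_cancel₀ hT
    · intro f hf
      simp only [Finset.mem_filter, Finset.mem_univ, true_and] at hf
      have hfl : List.ofFn f ≠ [] := by
        intro hc'
        have : l'.length = 0 := by
          have := List.length_ofFn (f := f)
          rw [hc'] at this
          simp at this
          omega
        exact h (List.length_eq_zero_iff.1 this)
      have hlast := W_last M R σ π s t hR hRst hf hfl h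
      exact (nm_spec M R σ π hR hfl h hlast).1
  · rw [dif_neg hT]
    have hspec := (M.feasible_nonempty (l'.getLast h) (Classical.arbitrary A)).choose_spec
    exact subset_convexHull ℝ _ (Set.mem_iUnion.2 ⟨Classical.arbitrary A,
      ⟨⟨hspec.1, hspec.2.1⟩, hspec.2.2⟩⟩)

lemma nbar_nonneg [Nonempty A] (hR : IsForallBisim M R) (hRst : R s t) (l' : List S)
    (x : S) : 0 ≤ nbar M R σ π s t hR l' x := by
  by_cases h : l' ≠ []
  · exact (stepTo_isDist M (nbar_step M R σ π s t hR hRst l' h)).1 x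
  · rw [nbar, dif_neg h]

/-- decomposition of the matched step into a scheduler part and nature part -/
noncomputable def DD [Nonempty A] (hR : IsForallBisim M R) (hRst : R s t)
    (l' : List S) (h : l' ≠ []) : (A → ℝ) × (A → S → ℝ) :=
  (stepTo_decomp M _ _ (nbar_step M R σ π s t hR hRst l' h)).choose

lemma DD_spec [Nonempty A] (hR : IsForallBisim M R) (hRst : R s t)
    (l' : List S) (h : l' ≠ []) :
    IsDist (DD M R σ π s t hR hRst l' h).1 ∧
      (∀ a, Feasible M (l'.getLast h) a ((DD M R σ π s t hR hRst l' h).2 a)) ∧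
      ∀ x, ∑ a, (DD M R σ π s t hR hRst l' h).1 a * (DD M R σ π s t hR hRst l' h).2 a x
        = nbar M R σ π s t hR l' x :=
  (stepTo_decomp M _ _ (nbar_step M R σ π s t hR hRst l' h)).choose_spec

noncomputable def sched' [Nonempty A] (hR : IsForallBisim M R) (hRst : R s t) :
    Scheduler S A where
  f ω := (DD M R σ π s t hR hRst ω.1 ω.2).1
  dist ω := (DD_spec M R σ π s t hR hRst ω.1 ω.2).1

noncomputable def nat' [Nonempty A] (hR : IsForallBisim M R) (hRst : R s t) :
    Nature M where
  f ω a := (DD M R σ π s t hR hRst ω.1 ω.2).2 a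
  feasible ω a := (DD_spec M R σ π s t hR hRst ω.1 ω.2).2.1 a

lemma sched'_comb [Nonempty A] (hR : IsForallBisim M R) (hRst : R s t)
    (l' : List S) (h : l' ≠ []) (y : S) :
    ∑ a, (sched' M R σ π s t hR hRst).f ⟨l', h⟩ a * (nat' M R σ π s t hR hRst).f ⟨l', h⟩ a y
      = nbar M R σ π s t hR l' y :=
  (DD_spec M R σ π s t hR hRst l' h).2.2 y

end PartB2

section PartB3
variable {S A AP : Type} [Fintype S] [Fintype A]
variable (M : IMDP S A AP) (R : S → S → Prop) (σ : Scheduler S A) (π : Nature M)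
    (s t : S)
variable (Pr : S → Scheduler S A → Nature M → @Measure (ℕ → S) (pathSigma S))

lemma ofFn_one (f : Fin 1 → S) : List.ofFn f = [f 0] := by
  simp [List.ofFn_succ]

lemma sum_fun_one (F : S → ℝ) : ∑ g : Fin 1 → S, F (g 0) = ∑ y : S, F y := by
  apply Fintype.sum_bijective (fun g : Fin 1 → S => g 0)
  · constructor
    · intro g g' h
      funext i
      have : i = 0 := Subsingleton.elim i 0
      rw [this]; exact h
    · intro y
      exact ⟨fun _ => y, rfl⟩
  · intro g; rfl

lemma W_fst (hR : IsForallBisim M R) (hRst : R s t)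
    (hPr : IsPathMeasure M s σ π (Pr s σ π)) :
    ∀ (n : ℕ) (f : Fin (n+1) → S),
      ∑ g : Fin (n+1) → S, W M R σ π s t hR (List.ofFn f) (List.ofFn g)
        = (Pr s σ π (Cyl (List.ofFn f))).toReal := by
  intro n
  induction n with
  | zero =>
      intro f
      rw [Finset.sum_congr rfl (fun g _ => by rw [ofFn_one f, ofFn_one g])]
      rw [sum_fun_one (fun y => W M R σ π s t hR [f 0] [y])]
      rw [Finset.sum_congr rfl (fun y _ => W_single M R σ π s t hR (f 0) y)]
      rw [ofFn_one f, hPr.2.1 (f 0)]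
      by_cases h : f 0 = s
      · simp [h]
      · have : ∀ y, ¬(f 0 = s ∧ y = t) := fun y hc => h hc.1
        simp [h, this]
  | succ n ih =>
      intro f
      set f0 : Fin (n+1) → S := fun i => f i.castSucc with hf0
      set x := f (Fin.last (n+1)) with hx
      have hofn : List.ofFn f = List.ofFn f0 ++ [x] := by
        rw [List.ofFn_succ' f, List.concat_eq_append]
      have hne0 : List.ofFn f0 ≠ [] := ofFn_ne_nil f0
      rw [sum_snoc (fun g => W M R σ π s t hR (List.ofFn f) (List.ofFn g))]
      have hterm : ∀ (g0 : Fin (n+1) → S) (y : S),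
          W M R σ π s t hR (List.ofFn f) (List.ofFn (Fin.snoc g0 y : Fin (n+2) → S))
            = W M R σ π s t hR (List.ofFn f0) (List.ofFn g0) *
              gam R (muc M σ π (List.ofFn f0)) (nm M R σ π hR (List.ofFn f0) (List.ofFn g0)) x y := by
        intro g0 y
        rw [ofFn_snoc g0 y, hofn]
        exact W_append M R σ π s t hR _ _ hne0 (ofFn_ne_nil g0) x y
      simp only [hterm]
      have hinner : ∀ g0 : Fin (n+1) → S,
          ∑ y, W M R σ π s t hR (List.ofFn f0) (List.ofFn g0) *
            gam R (muc M σ π (List.ofFn f0)) (nm M R σ π hR (List.ofFn f0) (List.ofFn g0)) x y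
          = W M R σ π s t hR (List.ofFn f0) (List.ofFn g0) * muc M σ π (List.ofFn f0) x := by
        intro g0
        rw [← Finset.mul_sum]
        by_cases hw : W M R σ π s t hR (List.ofFn f0) (List.ofFn g0) = 0
        · rw [hw, zero_mul, zero_mul]
        · congr 1
          have hlast := W_last M R σ π s t hR hRst hw hne0 (ofFn_ne_nil g0)
          have hspec := nm_spec M R σ π hR hne0 (ofFn_ne_nil g0) hlast
          exact gam_fst hR.1 (muc_nonneg M σ π _) (nm_nonneg M R σ π hR _ _) hspec.2 x
      rw [Finset.sum_congr rfl (fun g0 _ => hinner g0), ← Finset.sum_mul, ih f0]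
      rw [hofn, hPr.2.2 (List.ofFn f0) hne0 x, ENNReal.toReal_mul]
      congr 1
      rw [ENNReal.toReal_ofReal (Finset.sum_nonneg fun a _ =>
        mul_nonneg ((σ.dist _).1 a) ((π.feasible _ a).1.1 x))]
      rw [muc_eq M σ π _ hne0]
      rfl

lemma W_snd [Nonempty A] (hR : IsForallBisim M R) (hRst : R s t)
    (hPr : IsPathMeasure M t (sched' M R σ π s t hR hRst) (nat' M R σ π s t hR hRst)
      (Pr t (sched' M R σ π s t hR hRst) (nat' M R σ π s t hR hRst))) :
    ∀ (n : ℕ) (g : Fin (n+1) → S),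
      ∑ f : Fin (n+1) → S, W M R σ π s t hR (List.ofFn f) (List.ofFn g)
        = (Pr t (sched' M R σ π s t hR hRst) (nat' M R σ π s t hR hRst)
            (Cyl (List.ofFn g))).toReal := by
  intro n
  induction n with
  | zero =>
      intro g
      rw [Finset.sum_congr rfl (fun f _ => by rw [ofFn_one f, ofFn_one g])]
      rw [sum_fun_one (fun y => W M R σ π s t hR [y] [g 0])]
      rw [Finset.sum_congr rfl (fun y _ => W_single M R σ π s t hR y (g 0))]
      rw [ofFn_one g, hPr.2.1 (g 0)]
      by_cases h : g 0 = t
      · have : ∀ y, (y = s ∧ g 0 = t) ↔ (y = s) := fun y => by simp [h]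
        simp only [this]
        simp [h]
      · have : ∀ y, ¬(y = s ∧ g 0 = t) := fun y hc => h hc.2
        simp [h, this]
  | succ n ih =>
      intro g
      set g0 : Fin (n+1) → S := fun i => g i.castSucc with hg0
      set y := g (Fin.last (n+1)) with hy
      have hofn : List.ofFn g = List.ofFn g0 ++ [y] := by
        rw [List.ofFn_succ' g, List.concat_eq_append]
      have hne0 : List.ofFn g0 ≠ [] := ofFn_ne_nil g0
      rw [sum_snoc (fun f => W M R σ π s t hR (List.ofFn f) (List.ofFn g))]
      have hterm : ∀ (f0 : Fin (n+1) → S) (x : S),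
          W M R σ π s t hR (List.ofFn (Fin.snoc f0 x : Fin (n+2) → S)) (List.ofFn g)
            = W M R σ π s t hR (List.ofFn f0) (List.ofFn g0) *
              gam R (muc M σ π (List.ofFn f0)) (nm M R σ π hR (List.ofFn f0) (List.ofFn g0)) x y := by
        intro f0 x
        rw [ofFn_snoc f0 x, hofn]
        exact W_append M R σ π s t hR _ _ (ofFn_ne_nil f0) hne0 x y
      simp only [hterm]
      have hinner : ∀ f0 : Fin (n+1) → S,
          ∑ x, W M R σ π s t hR (List.ofFn f0) (List.ofFn g0) *
            gam R (muc M σ π (List.ofFn f0)) (nm M R σ π hR (List.ofFn f0) (List.ofFn g0)) x y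
          = W M R σ π s t hR (List.ofFn f0) (List.ofFn g0) *
              nm M R σ π hR (List.ofFn f0) (List.ofFn g0) y := by
        intro f0
        rw [← Finset.mul_sum]
        by_cases hw : W M R σ π s t hR (List.ofFn f0) (List.ofFn g0) = 0
        · rw [hw, zero_mul, zero_mul]
        · congr 1
          have hlast := W_last M R σ π s t hR hRst hw (ofFn_ne_nil f0) hne0
          have hspec := nm_spec M R σ π hR (ofFn_ne_nil f0) hne0 hlast
          exact gam_snd hR.1 (muc_nonneg M σ π _) (nm_nonneg M R σ π hR _ _) hspec.2 y
      -- the key identity: the sum is T (ofFn g0) * nbar (ofFn g0) y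
      have hsum_key : ∑ f0 : Fin (n+1) → S,
          W M R σ π s t hR (List.ofFn f0) (List.ofFn g0) *
            nm M R σ π hR (List.ofFn f0) (List.ofFn g0) y
          = T M R σ π s t hR (List.ofFn g0) * nbar M R σ π s t hR (List.ofFn g0) y := by
        have hT : T M R σ π s t hR (List.ofFn g0)
            = ∑ f0 : Fin (n+1) → S, W M R σ π s t hR (List.ofFn f0) (List.ofFn g0) := by
          rw [T]
          exact sum_ofFn_reindex (List.length_ofFn (f := g0))
            (fun l => W M R σ π s t hR l (List.ofFn g0))
        by_cases hTz : T M R σ π s t hR (List.ofFn g0) = 0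
        · have hWz : ∀ f0 : Fin (n+1) → S, W M R σ π s t hR (List.ofFn f0) (List.ofFn g0) = 0 := by
            have := (Finset.sum_eq_zero_iff_of_nonneg
              (fun f0 _ => W_nonneg M R σ π s t hR (List.ofFn f0) (List.ofFn g0))).1 (hT ▸ hTz)
            exact fun f0 => this f0 (Finset.mem_univ f0)
          rw [hTz, zero_mul]
          exact Finset.sum_eq_zero fun f0 _ => by rw [hWz f0, zero_mul]
        · rw [nbar, dif_pos hne0, dif_pos hTz]
          have : ((T M R σ π s t hR (List.ofFn g0))⁻¹ •
              ∑ f : Fin (List.ofFn g0).length → S,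
                W M R σ π s t hR (List.ofFn f) (List.ofFn g0) • nm M R σ π hR (List.ofFn f) (List.ofFn g0)) y
              = (T M R σ π s t hR (List.ofFn g0))⁻¹ *
                ∑ f0 : Fin (n+1) → S,
                  W M R σ π s t hR (List.ofFn f0) (List.ofFn g0) *
                    nm M R σ π hR (List.ofFn f0) (List.ofFn g0) y := by
            simp only [Pi.smul_apply, smul_eq_mul, Finset.sum_apply]
            congr 1
            exact sum_ofFn_reindex (List.length_ofFn (f := g0))
              (fun l => W M R σ π s t hR l (List.ofFn g0) * nm M R σ π hR l (List.ofFn g0) y)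
          rw [this, ← mul_assoc, mul_inv_cancel₀ hTz, one_mul]
      rw [Finset.sum_congr rfl (fun f0 _ => hinner f0), hsum_key]
      have hTr : T M R σ π s t hR (List.ofFn g0)
          = (Pr t (sched' M R σ π s t hR hRst) (nat' M R σ π s t hR hRst)
              (Cyl (List.ofFn g0))).toReal := by
        rw [T]
        rw [sum_ofFn_reindex (List.length_ofFn (f := g0))
          (fun l => W M R σ π s t hR l (List.ofFn g0))]
        exact ih g0
      rw [hTr, hofn, hPr.2.2 (List.ofFn g0) hne0 y, ENNReal.toReal_mul]
      congr 1
      rw [sched'_comb M R σ π s t hR hRst (List.ofFn g0) hne0 y]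
      rw [ENNReal.toReal_ofReal (nbar_nonneg M R σ π s t hR hRst _ y)]

/-- the central coupling identity -/
lemma coupling_sum [Nonempty A] (hR : IsForallBisim M R) (hRst : R s t)
    (hPrs : IsPathMeasure M s σ π (Pr s σ π))
    (hPrt : IsPathMeasure M t (sched' M R σ π s t hR hRst) (nat' M R σ π s t hR hRst)
      (Pr t (sched' M R σ π s t hR hRst) (nat' M R σ π s t hR hRst)))
    (n : ℕ) (G : (Fin (n+1) → S) → Prop)
    (hG : ∀ f g : Fin (n+1) → S, (∀ i, R (f i) (g i)) → (G f ↔ G g)) :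
    ∑ f : Fin (n+1) → S, (if G f then (Pr s σ π (Cyl (List.ofFn f))).toReal else 0)
      = ∑ g : Fin (n+1) → S,
          (if G g then (Pr t (sched' M R σ π s t hR hRst) (nat' M R σ π s t hR hRst)
            (Cyl (List.ofFn g))).toReal else 0) := by
  have key : ∀ f g : Fin (n+1) → S,
      (if G f then W M R σ π s t hR (List.ofFn f) (List.ofFn g) else 0)
        = (if G g then W M R σ π s t hR (List.ofFn f) (List.ofFn g) else 0) := by
    intro f g
    by_cases hw : W M R σ π s t hR (List.ofFn f) (List.ofFn g) = 0
    · rw [hw]; simp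
    · have hpt := List.forall₂_iff_get.1 (W_supp M R σ π s t hR hRst hw)
      have hR' : ∀ i : Fin (n+1), R (f i) (g i) := by
        intro i
        have h1 : (i : ℕ) < (List.ofFn f).length := by simpa using i.2
        have h2 : (i : ℕ) < (List.ofFn g).length := by simpa using i.2
        have := hpt.2 i h1 h2
        rw [List.get_ofFn, List.get_ofFn] at this
        exact this
      rw [if_congr (hG f g hR') rfl rfl]
  calc ∑ f : Fin (n+1) → S, (if G f then (Pr s σ π (Cyl (List.ofFn f))).toReal else 0)
      = ∑ f : Fin (n+1) → S, (if G f then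
          ∑ g : Fin (n+1) → S, W M R σ π s t hR (List.ofFn f) (List.ofFn g) else 0) := by
        refine Finset.sum_congr rfl fun f _ => ?_
        rw [W_fst M R σ π s t Pr hR hRst hPrs n f]
    _ = ∑ f : Fin (n+1) → S, ∑ g : Fin (n+1) → S,
          (if G f then W M R σ π s t hR (List.ofFn f) (List.ofFn g) else 0) := by
        refine Finset.sum_congr rfl fun f _ => ?_
        split <;> simp
    _ = ∑ g : Fin (n+1) → S, ∑ f : Fin (n+1) → S,
          (if G g then W M R σ π s t hR (List.ofFn f) (List.ofFn g) else 0) := by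
        rw [Finset.sum_comm]
        exact Finset.sum_congr rfl fun g _ => Finset.sum_congr rfl fun f _ => key f g
    _ = ∑ g : Fin (n+1) → S, (if G g then
          ∑ f : Fin (n+1) → S, W M R σ π s t hR (List.ofFn f) (List.ofFn g) else 0) := by
        refine Finset.sum_congr rfl fun g _ => ?_
        split <;> simp
    _ = _ := by
        refine Finset.sum_congr rfl fun g _ => ?_
        rw [W_snd M R σ π s t Pr hR hRst hPrt n g]

end PartB3

section PartC
variable {S A AP : Type} [Fintype S] [Fintype A]

lemma measurable_cyl (l : List S) (h : l ≠ []) :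
    MeasurableSet[pathSigma S] (Cyl l) :=
  MeasurableSpace.measurableSet_generateFrom ⟨l, h, rfl⟩

lemma mem_cyl_ofFn {n : ℕ} (f : Fin n → S) (ρ : ℕ → S) :
    ρ ∈ Cyl (List.ofFn f) ↔ ∀ i : Fin n, ρ i = f i := by
  constructor
  · intro h i
    have hi : (i : ℕ) < (List.ofFn f).length := by simpa using i.2
    have := h ⟨i, hi⟩
    rw [List.get_ofFn] at this
    exact this
  · intro h i
    have hi : (i : ℕ) < n := by
      have := i.2
      simpa using this
    rw [List.get_ofFn]
    exact h (Fin.cast (List.length_ofFn (f := f)) i)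

lemma setOf_fin_eq_biUnion (n : ℕ) (G : (Fin (n+1) → S) → Prop) :
    {ρ : ℕ → S | G (fun i : Fin (n+1) => ρ i)}
      = ⋃ f ∈ Finset.univ.filter (fun f : Fin (n+1) → S => G f), Cyl (List.ofFn f) := by
  ext ρ
  simp only [Set.mem_setOf_eq, Set.mem_iUnion, Finset.mem_filter, Finset.mem_univ, true_and]
  constructor
  · intro h
    exact ⟨fun i => ρ i, h, (mem_cyl_ofFn _ ρ).2 fun i => rfl⟩
  · rintro ⟨f, hf, hρ⟩
    have := (mem_cyl_ofFn f ρ).1 hρ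
    have hfe : (fun i : Fin (n+1) => ρ i) = f := funext this
    rw [hfe]
    exact hf

lemma measure_setOf_fin (μ : @Measure (ℕ → S) (pathSigma S)) (n : ℕ)
    (G : (Fin (n+1) → S) → Prop) :
    μ {ρ : ℕ → S | G (fun i : Fin (n+1) => ρ i)}
      = ∑ f ∈ Finset.univ.filter (fun f : Fin (n+1) → S => G f), μ (Cyl (List.ofFn f)) := by
  letI : MeasurableSpace (ℕ → S) := pathSigma S
  rw [setOf_fin_eq_biUnion n G]
  refine measure_biUnion_finset ?_ ?_
  · intro f _ g _ hfg
    refine Set.disjoint_left.2 fun ρ hρf hρg => hfg ?_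
    have h1 := (mem_cyl_ofFn f ρ).1 hρf
    have h2 := (mem_cyl_ofFn g ρ).1 hρg
    funext i
    rw [← h1 i, ← h2 i]
  · intro f _
    exact measurable_cyl _ (ofFn_ne_nil f)

variable (M : IMDP S A AP) (R : S → S → Prop) (σ : Scheduler S A) (π : Nature M)
    (s t : S)
variable (Pr : S → Scheduler S A → Nature M → @Measure (ℕ → S) (pathSigma S))

lemma measure_eq_setOf [Nonempty A] (hR : IsForallBisim M R) (hRst : R s t)
    (hPrs : IsPathMeasure M s σ π (Pr s σ π))
    (hPrt : IsPathMeasure M t (sched' M R σ π s t hR hRst) (nat' M R σ π s t hR hRst)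
      (Pr t (sched' M R σ π s t hR hRst) (nat' M R σ π s t hR hRst)))
    (n : ℕ) (G : (Fin (n+1) → S) → Prop)
    (hG : ∀ f g : Fin (n+1) → S, (∀ i, R (f i) (g i)) → (G f ↔ G g)) :
    Pr s σ π {ρ : ℕ → S | G (fun i : Fin (n+1) => ρ i)}
      = Pr t (sched' M R σ π s t hR hRst) (nat' M R σ π s t hR hRst)
          {ρ : ℕ → S | G (fun i : Fin (n+1) => ρ i)} := by
  haveI h1 : IsProbabilityMeasure (Pr s σ π) := hPrs.1
  haveI h2 : IsProbabilityMeasure (Pr t (sched' M R σ π s t hR hRst)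
    (nat' M R σ π s t hR hRst)) := hPrt.1
  rw [measure_setOf_fin, measure_setOf_fin]
  have hne1 : ∀ f : Fin (n+1) → S, Pr s σ π (Cyl (List.ofFn f)) ≠ ⊤ :=
    fun f => measure_ne_top _ _
  have hne2 : ∀ f : Fin (n+1) → S, Pr t (sched' M R σ π s t hR hRst)
      (nat' M R σ π s t hR hRst) (Cyl (List.ofFn f)) ≠ ⊤ :=
    fun f => measure_ne_top _ _
  have hs1 : (∑ f ∈ Finset.univ.filter (fun f : Fin (n+1) → S => G f),
      Pr s σ π (Cyl (List.ofFn f))) ≠ ⊤ := by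
    refine (ENNReal.sum_lt_top.2 fun f _ => ?_).ne
    exact (hne1 f).lt_top
  have hs2 : (∑ f ∈ Finset.univ.filter (fun f : Fin (n+1) → S => G f),
      Pr t (sched' M R σ π s t hR hRst) (nat' M R σ π s t hR hRst)
        (Cyl (List.ofFn f))) ≠ ⊤ := by
    refine (ENNReal.sum_lt_top.2 fun f _ => ?_).ne
    exact (hne2 f).lt_top
  rw [← ENNReal.toReal_eq_toReal_iff' hs1 hs2]
  rw [ENNReal.toReal_sum (fun f _ => hne1 f), ENNReal.toReal_sum (fun f _ => hne2 f)]
  rw [Finset.sum_filter, Finset.sum_filter]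
  exact coupling_sum M R σ π s t Pr hR hRst hPrs hPrt n G hG

end PartC

section PartD
variable {S A AP : Type} [Fintype S] [Fintype A]

def SatInv (M : IMDP S A AP)
    (Pr : S → Scheduler S A → Nature M → @Measure (ℕ → S) (pathSigma S))
    (φ : StateFormula AP) : Prop :=
  ∀ s t : S, SimForall M s t → (SatE M Pr φ s ↔ SatE M Pr φ t)

def SubInv (M : IMDP S A AP)
    (Pr : S → Scheduler S A → Nature M → @Measure (ℕ → S) (pathSigma S)) :
    PathFormula AP → Prop
  | PathFormula.next φ0 => SatInv M Pr φ0
  | PathFormula.untl φ1 φ2 => SatInv M Pr φ1 ∧ SatInv M Pr φ2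
  | PathFormula.buntl _ φ1 φ2 => SatInv M Pr φ1 ∧ SatInv M Pr φ2

variable (M : IMDP S A AP)
    (Pr : S → Scheduler S A → Nature M → @Measure (ℕ → S) (pathSigma S))

lemma psat_measure_eq [Nonempty A] (R : S → S → Prop) (σ : Scheduler S A) (π : Nature M)
    (s t : S) (hR : IsForallBisim M R) (hRst : R s t)
    (hPr : ∀ (s : S) (σ : Scheduler S A) (π : Nature M), IsPathMeasure M s σ π (Pr s σ π))
    (ψ : PathFormula AP) (hinv : SubInv M Pr ψ) :
    Pr s σ π {ρ : ℕ → S | PSatE M Pr ψ ρ}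
      = Pr t (sched' M R σ π s t hR hRst) (nat' M R σ π s t hR hRst)
          {ρ : ℕ → S | PSatE M Pr ψ ρ} := by
  have hPrs := hPr s σ π
  have hPrt := hPr t (sched' M R σ π s t hR hRst) (nat' M R σ π s t hR hRst)
  cases ψ with
  | next φ0 =>
      have hset : {ρ : ℕ → S | PSatE M Pr (PathFormula.next φ0) ρ}
          = {ρ : ℕ → S | (fun f : Fin 2 → S => SatE M Pr φ0 (f 1)) (fun i : Fin 2 => ρ i)} := by
        ext ρ
        simp only [Set.mem_setOf_eq, PSatE]
        rfl
      rw [hset]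
      exact measure_eq_setOf M R σ π s t Pr hR hRst hPrs hPrt 1
        (fun f => SatE M Pr φ0 (f 1))
        (fun f g hfg => hinv (f 1) (g 1) ⟨R, hR, hfg 1⟩)
  | buntl k φ1 φ2 =>
      cases k with
      | zero =>
          have hset : {ρ : ℕ → S | PSatE M Pr (PathFormula.buntl 0 φ1 φ2) ρ} = ∅ := by
            ext ρ
            simp [PSatE]
          rw [hset]
          simp
      | succ m =>
          set G : (Fin (m+1) → S) → Prop := fun f =>
            ∃ (i : ℕ) (hi : i < m+1), SatE M Pr φ2 (f ⟨i, hi⟩) ∧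
              ∀ (j : ℕ) (hj : j < i), SatE M Pr φ1 (f ⟨j, lt_trans hj hi⟩) with hGdef
          have hset : {ρ : ℕ → S | PSatE M Pr (PathFormula.buntl (m+1) φ1 φ2) ρ}
              = {ρ : ℕ → S | G (fun i : Fin (m+1) => ρ i)} := by
            ext ρ
            simp only [Set.mem_setOf_eq, PSatE, hGdef]
            constructor
            · rintro ⟨i, hi, h2, h1⟩
              exact ⟨i, hi, h2, fun j hj => h1 j hj⟩
            · rintro ⟨i, hi, h2, h1⟩
              exact ⟨i, hi, h2, fun j hj => h1 j hj⟩
          rw [hset]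
          refine measure_eq_setOf M R σ π s t Pr hR hRst hPrs hPrt m G ?_
          have himp : ∀ f g : Fin (m+1) → S, (∀ i, R (f i) (g i)) → G f → G g := by
            rintro f g hfg ⟨i, hi, h2, h1⟩
            exact ⟨i, hi, (hinv.2 _ _ ⟨R, hR, hfg _⟩).1 h2,
              fun j hj => (hinv.1 _ _ ⟨R, hR, hfg _⟩).1 (h1 j hj)⟩
          intro f g hfg
          exact ⟨himp f g hfg, himp g f (fun i => hR.1.symm (hfg i))⟩
  | untl φ1 φ2 =>
      set G : ∀ m : ℕ, (Fin (m+1) → S) → Prop := fun m f =>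
        ∃ (i : ℕ) (hi : i < m+1), SatE M Pr φ2 (f ⟨i, hi⟩) ∧
          ∀ (j : ℕ) (hj : j < i), SatE M Pr φ1 (f ⟨j, lt_trans hj hi⟩) with hGdef
      set Am : ℕ → Set (ℕ → S) := fun m => {ρ : ℕ → S | G m (fun i : Fin (m+1) => ρ i)}
        with hAdef
      have hset : {ρ : ℕ → S | PSatE M Pr (PathFormula.untl φ1 φ2) ρ} = ⋃ m : ℕ, Am m := by
        ext ρ
        simp only [Set.mem_setOf_eq, PSatE, Set.mem_iUnion, hAdef, hGdef]
        constructor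
        · rintro ⟨k, i, hik, h2, h1⟩
          exact ⟨i, i, Nat.lt_succ_self i, h2, fun j hj => h1 j hj⟩
        · rintro ⟨m, i, hi, h2, h1⟩
          exact ⟨m+1, i, hi, h2, fun j hj => h1 j hj⟩
      have hmono : Monotone Am := by
        intro m m' hmm ρ hρ
        obtain ⟨i, hi, h2, h1⟩ := hρ
        exact ⟨i, by omega, h2, fun j hj => h1 j hj⟩
      rw [hset]
      rw [Directed.measure_iUnion (hmono.directed_le),
        Directed.measure_iUnion (hmono.directed_le)]
      refine iSup_congr fun m => ?_
      refine measure_eq_setOf M R σ π s t Pr hR hRst hPrs hPrt m (G m) ?_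
      have himp : ∀ f g : Fin (m+1) → S, (∀ i, R (f i) (g i)) → G m f → G m g := by
        rintro f g hfg ⟨i, hi, h2, h1⟩
        exact ⟨i, hi, (hinv.2 _ _ ⟨R, hR, hfg _⟩).1 h2,
          fun j hj => (hinv.1 _ _ ⟨R, hR, hfg _⟩).1 (h1 j hj)⟩
      intro f g hfg
      exact ⟨himp f g hfg, himp g f (fun i => hR.1.symm (hfg i))⟩

lemma prob_aux (hPr : ∀ (s : S) (σ : Scheduler S A) (π : Nature M),
      IsPathMeasure M s σ π (Pr s σ π))
    (s t : S) (R : S → S → Prop) (hR : IsForallBisim M R) (hRst : R s t)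
    (c : Cmp) (p : ℚ) (hp1 : 0 ≤ p) (hp2 : p ≤ 1) (ψ : PathFormula AP)
    (hinv : SubInv M Pr ψ) :
    SatE M Pr (StateFormula.prob c p hp1 hp2 ψ) s →
      SatE M Pr (StateFormula.prob c p hp1 hp2 ψ) t := by
  intro hs
  rw [SatE] at hs ⊢
  obtain ⟨σ, π, hval⟩ := hs
  haveI : Nonempty A := by
    rcases isEmpty_or_nonempty A with hA | hA
    · exfalso
      have := (σ.dist ⟨[s], by simp⟩).2
      rw [Finset.univ_eq_empty, Finset.sum_empty] at this
      exact zero_ne_one this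
    · exact hA
  refine ⟨sched' M R σ π s t hR hRst, nat' M R σ π s t hR hRst, ?_⟩
  rw [← psat_measure_eq M Pr R σ π s t hR hRst hPr ψ hinv]
  exact hval

lemma mainS (hPr : ∀ (s : S) (σ : Scheduler S A) (π : Nature M),
      IsPathMeasure M s σ π (Pr s σ π)) (φ : StateFormula AP) : SatInv M Pr φ := by
  induction φ using StateFormula.rec (motive_2 := fun ψ : PathFormula AP => SubInv M Pr ψ) with
  | tt => intro s t _; simp [SatE]
  | atom x =>
      rintro s t ⟨R, hR, hst⟩
      rw [SatE, SatE, (hR.2 s t hst).1]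
  | neg φ ih =>
      intro s t h
      rw [SatE, SatE]
      exact not_congr (ih s t h)
  | conj φ1 φ2 ih1 ih2 =>
      intro s t h
      rw [SatE, SatE]
      exact and_congr (ih1 s t h) (ih2 s t h)
  | prob c p hp1 hp2 ψ ihψ =>
      rintro s t ⟨R, hR, hst⟩
      constructor
      · exact prob_aux M Pr hPr s t R hR hst c p hp1 hp2 ψ ihψ
      · exact prob_aux M Pr hPr t s R hR (hR.1.symm hst) c p hp1 hp2 ψ ihψ
  | next φ0 ih => exact ih
  | untl φ1 φ2 ih1 ih2 => exact ⟨ih1, ih2⟩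
  | buntl k φ1 φ2 ih1 ih2 => exact ⟨ih1, ih2⟩

end PartD

theorem stmt2 {S A AP : Type} [Fintype S] [Fintype A] (M : IMDP S A AP)
    (Pr : S → Scheduler S A → Nature M → @Measure (ℕ → S) (pathSigma S))
    (hPr : ∀ (s : S) (σ : Scheduler S A) (π : Nature M), IsPathMeasure M s σ π (Pr s σ π))
    (s t : S) (hst : SimForall M s t) :
    ∀ φ : StateFormula AP, SatE M Pr φ s ↔ SatE M Pr φ t :=
  fun φ => mainS M Pr hPr φ s t hst
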